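/- Let μ,ν>0 and set Sc=ν/μ. Let ε,η>0 and define κ_η=(η/ν³)^{1/6} and κ_β=(η/μ³)^{1/6}. Let t be a tracer spectrum (2D framework) with associated shell sums 𝐭, dissipation rate χ and wavenumber κ_θ. Let wavenumbers satisfy κ0 ≤ κg < κf⁻ ≤ κf⁺ < κ_η, with 4κg ≤ κf⁻ and 4κf⁺ ≤ κ_β, and fix constants c1,…,c7>0. Assume: (i) c1·κ_η²/ln(κ_η/κf⁺) ≤ η/ε ≤ c2·κ_η²/ln(κ_η/κf⁺); (ii) for every κ∈[κg,κf⁻], c3·χ·ε^{-1/3}·κ^{-2/3} ≤ 𝐭_{κ,2κ} ≤ c4·χ·ε^{-1/3}·κ^{-2/3}; (iii) for every κ∈[κf⁺,κ_β], c5·χ·η^{-1/3} ≤ 𝐭_{κ,2κ} ≤ c6·χ·η^{-1/3}; (iv) 𝐭_{κ0,∞} ≤ c7·(𝐭_{κg,κf⁻} + 𝐭_{κf⁺,κ_β}). Then there exist constants c,C>0 depending only on c1,…,c7 such that c ≤ κ_θ²·(a+b) ≤ C, where a = κ_β^{-4/3}·Sc^{-1/3}·(κg^{-2/3} − (κf⁻)^{-2/3})·(ln(κ_η/κf⁺))^{-1/3}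 and b = κ_β^{-2}·ln(κ_β/κf⁺). (Theorem 5.1, first part, of the paper.) -/

import Mathlib

open Real

/-- Euclidean norm of a lattice vector `k ∈ ℤ^d`. -/
noncomputable def knorm {d : ℕ} (k : Fin d → ℤ) : ℝ :=
  Real.sqrt (∑ i, ((k i : ℝ)) ^ 2)

/-- Shell sum `𝐭_{κ1,κ2}` (finite upper end). -/
noncomputable def shellSum (d : ℕ) (L κ0 : ℝ) (t : (Fin d → ℤ) → ℝ) (κ1 κ2 : ℝ) : ℝ :=
  L ^ (-(d : ℤ)) * ∑' k : Fin d → ℤ,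
    (if κ1 ≤ κ0 * knorm k ∧ κ0 * knorm k < κ2 then t k else 0)

/-- Shell sum `𝐭_{κ1,∞}`. -/
noncomputable def shellSumTop (d : ℕ) (L κ0 : ℝ) (t : (Fin d → ℤ) → ℝ) (κ1 : ℝ) : ℝ :=
  L ^ (-(d : ℤ)) * ∑' k : Fin d → ℤ, (if κ1 ≤ κ0 * knorm k then t k else 0)

/-- Tracer dissipation rate `χ = μ L^{-d} κ0² Σ_k |k|² t(k)`. -/
noncomputable def chiRate (d : ℕ) (L κ0 μ : ℝ) (t : (Fin d → ℤ) → ℝ) : ℝ :=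
  μ * L ^ (-(d : ℤ)) * κ0 ^ 2 * ∑' k : Fin d → ℤ, knorm k ^ 2 * t k

/-- Indicator wavenumber squared, `κ_θ² = κ0² Σ|k|²t(k) / Σ t(k)`. -/
noncomputable def kThetaSq (d : ℕ) (κ0 : ℝ) (t : (Fin d → ℤ) → ℝ) : ℝ :=
  κ0 ^ 2 * (∑' k : Fin d → ℤ, knorm k ^ 2 * t k) / (∑' k : Fin d → ℤ, t k)

/-- A (discrete) tracer spectrum: nonnegative, vanishing at `k = 0`, not identically
zero, and with `Σ (1+|k|²) t(k) < ∞`. -/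
structure IsTracerSpectrum (d : ℕ) (t : (Fin d → ℤ) → ℝ) : Prop where
  nonneg : ∀ k, 0 ≤ t k
  map_zero : t 0 = 0
  exists_ne_zero : ∃ k, t k ≠ 0
  summable : Summable fun k : Fin d → ℤ => (1 + knorm k ^ 2) * t k

/- ### Auxiliary lemmas -/

lemma aux_knorm_nonneg {d : ℕ} (k : Fin d → ℤ) : 0 ≤ knorm k := Real.sqrt_nonneg _

lemma aux_one_le_knorm {d : ℕ} {k : Fin d → ℤ} (hk : k ≠ 0) : 1 ≤ knorm k := by
  rw [knorm, Real.one_le_sqrt]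
  obtain ⟨i, hi⟩ := Function.ne_iff.1 hk
  have hi' : k i ≠ 0 := by simpa using hi
  have h1 : (1:ℝ) ≤ ((k i : ℝ)) ^ 2 := by
    have : (1:ℤ) ≤ (k i) ^ 2 := by
      rcases hi'.lt_or_gt with h | h <;> nlinarith
    exact_mod_cast this
  calc (1:ℝ) ≤ ((k i : ℝ)) ^ 2 := h1
    _ ≤ ∑ j, ((k j : ℝ)) ^ 2 :=
        Finset.single_le_sum (f := fun j => ((k j : ℝ)) ^ 2)
          (fun j _ => sq_nonneg _) (Finset.mem_univ i)

lemma aux_summable {t : (Fin 2 → ℤ) → ℝ} (ht : IsTracerSpectrum 2 t) : Summable t := by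
  refine Summable.of_nonneg_of_le ht.nonneg (fun k => ?_) ht.summable
  exact le_mul_of_one_le_left (ht.nonneg k) (by nlinarith [sq_nonneg (knorm k)])

lemma aux_summable2 {t : (Fin 2 → ℤ) → ℝ} (ht : IsTracerSpectrum 2 t) :
    Summable fun k => knorm k ^ 2 * t k := by
  refine Summable.of_nonneg_of_le (fun k => mul_nonneg (sq_nonneg _) (ht.nonneg k))
    (fun k => ?_) ht.summable
  exact mul_le_mul_of_nonneg_right (by linarith) (ht.nonneg k)

lemma aux_shell_summable {t : (Fin 2 → ℤ) → ℝ} (ht : IsTracerSpectrum 2 t)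
    (P : (Fin 2 → ℤ) → Prop) [DecidablePred P] :
    Summable fun k => if P k then t k else 0 := by
  refine Summable.of_nonneg_of_le (fun k => ?_) (fun k => ?_) (aux_summable ht)
  · split_ifs; exacts [ht.nonneg k, le_refl 0]
  · split_ifs; exacts [le_refl _, ht.nonneg k]

lemma aux_shell_split {t : (Fin 2 → ℤ) → ℝ} (ht : IsTracerSpectrum 2 t)
    (L κ0 κ1 κ2 κ3 : ℝ) (h12 : κ1 ≤ κ2) (h23 : κ2 ≤ κ3) :
    shellSum 2 L κ0 t κ1 κ3 = shellSum 2 L κ0 t κ1 κ2 + shellSum 2 L κ0 t κ2 κ3 := by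
  unfold shellSum
  rw [← mul_add, ← Summable.tsum_add (aux_shell_summable ht _) (aux_shell_summable ht _)]
  congr 1
  refine tsum_congr fun k => ?_
  by_cases h1 : κ1 ≤ κ0 * knorm k
  · by_cases h2 : κ0 * knorm k < κ2
    · rw [if_pos ⟨h1, h2.trans_le h23⟩, if_pos ⟨h1, h2⟩,
        if_neg (fun hc => absurd h2 (not_lt.2 hc.1)), add_zero]
    · by_cases h3 : κ0 * knorm k < κ3
      · rw [if_pos ⟨h1, h3⟩, if_neg (fun hc => h2 hc.2), if_pos ⟨not_lt.1 h2, h3⟩, zero_add]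
      · rw [if_neg (fun hc => h3 hc.2), if_neg (fun hc => h2 hc.2),
          if_neg (fun hc => h3 hc.2), add_zero]
  · rw [if_neg (fun hc => h1 hc.1), if_neg (fun hc => h1 hc.1),
      if_neg (fun hc => h1 (le_trans h12 hc.1)), add_zero]

lemma aux_shell_nonneg {t : (Fin 2 → ℤ) → ℝ} (ht : IsTracerSpectrum 2 t)
    {L : ℝ} (hL : 0 < L) (κ0 κ1 κ2 : ℝ) : 0 ≤ shellSum 2 L κ0 t κ1 κ2 := by
  refine mul_nonneg (zpow_nonneg hL.le _) (tsum_nonneg fun k => ?_)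
  split_ifs; exacts [ht.nonneg k, le_refl 0]

lemma aux_shell_mono_right {t : (Fin 2 → ℤ) → ℝ} (ht : IsTracerSpectrum 2 t)
    {L : ℝ} (hL : 0 < L) (κ0 : ℝ) {κ1 κ2 κ3 : ℝ} (h12 : κ1 ≤ κ2) (h23 : κ2 ≤ κ3) :
    shellSum 2 L κ0 t κ1 κ2 ≤ shellSum 2 L κ0 t κ1 κ3 := by
  rw [aux_shell_split ht L κ0 κ1 κ2 κ3 h12 h23]
  have := aux_shell_nonneg ht hL κ0 κ2 κ3
  linarith

lemma aux_dyadic {t : (Fin 2 → ℤ) → ℝ} (ht : IsTracerSpectrum 2 t)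
    {L : ℝ} (hL : 0 < L) (κ0 : ℝ) {κ1 : ℝ} (hκ1 : 0 < κ1) (N : ℕ) :
    shellSum 2 L κ0 t κ1 (2 ^ N * κ1)
      = ∑ j ∈ Finset.range N, shellSum 2 L κ0 t (2 ^ j * κ1) (2 * (2 ^ j * κ1)) := by
  induction N with
  | zero =>
      rw [pow_zero, one_mul, Finset.range_zero, Finset.sum_empty]
      unfold shellSum
      have h0 : ∀ k : Fin 2 → ℤ,
          (if κ1 ≤ κ0 * knorm k ∧ κ0 * knorm k < κ1 then t k else 0) = 0 :=
        fun k => if_neg (fun hc => absurd (hc.1.trans_lt hc.2) (lt_irrefl _))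
      simp only [h0, tsum_zero, mul_zero]
  | succ n ih =>
      have h1 : (1:ℝ) ≤ 2 ^ n := one_le_pow₀ (by norm_num)
      have hsplit := aux_shell_split ht L κ0 κ1 (2 ^ n * κ1) (2 ^ (n+1) * κ1)
        (le_mul_of_one_le_left hκ1.le h1)
        (by rw [pow_succ]; nlinarith)
      rw [hsplit, ih, Finset.sum_range_succ]
      congr 2
      rw [pow_succ]; ring

lemma aux_two_shell_le_top {t : (Fin 2 → ℤ) → ℝ} (ht : IsTracerSpectrum 2 t)
    {L : ℝ} (hL : 0 < L) (κ0 : ℝ) {κg κfm κfp κβ : ℝ}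
    (h0g : κ0 ≤ κg) (hgm : κg ≤ κfm) (hmp : κfm ≤ κfp) (hpβ : κfp ≤ κβ) :
    shellSum 2 L κ0 t κg κfm + shellSum 2 L κ0 t κfp κβ ≤ shellSumTop 2 L κ0 t κ0 := by
  unfold shellSum shellSumTop
  rw [← mul_add, ← Summable.tsum_add (aux_shell_summable ht _) (aux_shell_summable ht _)]
  refine mul_le_mul_of_nonneg_left ?_ (zpow_nonneg hL.le _)
  refine Summable.tsum_le_tsum (fun k => ?_)
    ((aux_shell_summable ht _).add (aux_shell_summable ht _)) (aux_shell_summable ht _)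
  by_cases hA : κg ≤ κ0 * knorm k ∧ κ0 * knorm k < κfm
  · rw [if_pos hA, if_neg (fun hB => absurd (hA.2.trans_le hmp) (not_lt.2 hB.1)), add_zero,
      if_pos (h0g.trans hA.1)]
  · rw [if_neg hA, zero_add]
    by_cases hB : κfp ≤ κ0 * knorm k ∧ κ0 * knorm k < κβ
    · rw [if_pos hB, if_pos (le_trans (h0g.trans (hgm.trans hmp)) hB.1)]
    · rw [if_neg hB]
      split_ifs; exacts [ht.nonneg k, le_refl 0]

lemma aux_top_eq {t : (Fin 2 → ℤ) → ℝ} (ht : IsTracerSpectrum 2 t)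
    (L : ℝ) {κ0 : ℝ} (hκ0 : 0 < κ0) :
    shellSumTop 2 L κ0 t κ0 = L ^ (-((2:ℕ) : ℤ)) * ∑' k : Fin 2 → ℤ, t k := by
  unfold shellSumTop
  congr 1
  refine tsum_congr fun k => ?_
  by_cases hk : k = 0
  · subst hk; simp [ht.map_zero]
  · rw [if_pos (le_mul_of_one_le_right hκ0.le (aux_one_le_knorm hk))]

lemma aux_pow_rpow (j : ℕ) (e : ℝ) : ((2:ℝ) ^ j) ^ e = ((2:ℝ) ^ e) ^ j := by
  rw [← Real.rpow_natCast (2:ℝ) j, ← Real.rpow_mul (by norm_num), mul_comm,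
    Real.rpow_mul (by norm_num), Real.rpow_natCast]

lemma aux_eq_of_log {x y : ℝ} (hx : 0 < x) (hy : 0 < y)
    (h : Real.log x = Real.log y) : x = y := by
  rw [← Real.exp_log hx, h, Real.exp_log hy]

set_option maxHeartbeats 4000000 in
/-- Theorem 5.1 (first part): 2D, large Schmidt number. -/
theorem tracer_2D_large_Schmidt
    (c1 c2 c3 c4 c5 c6 c7 : ℝ)
    (hc1 : 0 < c1) (hc2 : 0 < c2) (hc3 : 0 < c3) (hc4 : 0 < c4)
    (hc5 : 0 < c5) (hc6 : 0 < c6) (hc7 : 0 < c7) :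
    ∃ c C : ℝ, 0 < c ∧ 0 < C ∧
      ∀ (L μ ν ε η κg κfm κfp κ0 Sc κη κβ χ a b : ℝ) (t : (Fin 2 → ℤ) → ℝ),
        0 < L → 0 < μ → 0 < ν → 0 < ε → 0 < η →
        IsTracerSpectrum 2 t →
        κ0 = 2 * π / L →
        Sc = ν / μ →
        κη = (η / ν ^ 3) ^ (1 / 6 : ℝ) →
        κβ = (η / μ ^ 3) ^ (1 / 6 : ℝ) →
        χ = chiRate 2 L κ0 μ t →
        a = κβ ^ (-4 / 3 : ℝ) * Sc ^ (-1 / 3 : ℝ)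
              * (κg ^ (-2 / 3 : ℝ) - κfm ^ (-2 / 3 : ℝ))
              * (Real.log (κη / κfp)) ^ (-1 / 3 : ℝ) →
        b = κβ ^ (-2 : ℝ) * Real.log (κβ / κfp) →
        κ0 ≤ κg → κg < κfm → κfm ≤ κfp → κfp < κη →
        4 * κg ≤ κfm → 4 * κfp ≤ κβ →
        (c1 * κη ^ 2 / Real.log (κη / κfp) ≤ η / ε ∧
          η / ε ≤ c2 * κη ^ 2 / Real.log (κη / κfp)) →
        (∀ κ, κg ≤ κ → κ ≤ κfm →
          c3 * χ * ε ^ (-1 / 3 : ℝ) * κ ^ (-2 / 3 : ℝ) ≤ shellSum 2 L κ0 t κ (2 * κ) ∧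
          shellSum 2 L κ0 t κ (2 * κ) ≤ c4 * χ * ε ^ (-1 / 3 : ℝ) * κ ^ (-2 / 3 : ℝ)) →
        (∀ κ, κfp ≤ κ → κ ≤ κβ →
          c5 * χ * η ^ (-1 / 3 : ℝ) ≤ shellSum 2 L κ0 t κ (2 * κ) ∧
          shellSum 2 L κ0 t κ (2 * κ) ≤ c6 * χ * η ^ (-1 / 3 : ℝ)) →
        shellSumTop 2 L κ0 t κ0 ≤ c7 * (shellSum 2 L κ0 t κg κfm + shellSum 2 L κ0 t κfp κβ) →
        c ≤ kThetaSq 2 κ0 t * (a + b) ∧ kThetaSq 2 κ0 t * (a + b) ≤ C := by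
  -- absolute constants
  set ρ : ℝ := (2:ℝ) ^ (-2 / 3 : ℝ) with hρdef
  have hρ0 : 0 < ρ := Real.rpow_pos_of_pos (by norm_num) _
  have hρ1 : ρ < 1 := Real.rpow_lt_one_of_one_lt_of_neg (by norm_num) (by norm_num)
  set d0 : ℝ := 1 - (4:ℝ) ^ (-2 / 3 : ℝ) with hd0def
  have hd0 : 0 < d0 := by
    have : (4:ℝ) ^ (-2 / 3 : ℝ) < 1 :=
      Real.rpow_lt_one_of_one_lt_of_neg (by norm_num) (by norm_num)
    simp only [hd0def]; linarith
  have hlog2 : (0:ℝ) < Real.log 2 := Real.log_pos (by norm_num)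
  set m1 : ℝ := min (c2 ^ (-1 / 3 : ℝ)) 1 with hm1def
  set M1 : ℝ := max (c1 ^ (-1 / 3 : ℝ)) 1 with hM1def
  set m2 : ℝ := min c3 (c5 / (2 * Real.log 2)) with hm2def
  set M2 : ℝ := max (c4 * (1 - ρ)⁻¹ / d0) (3 * c6 / (2 * Real.log 2)) with hM2def
  have hm1 : 0 < m1 := lt_min (Real.rpow_pos_of_pos hc2 _) one_pos
  have hM1 : 0 < M1 := lt_of_lt_of_le one_pos (le_max_right _ _)
  have hm2 : 0 < m2 := lt_min hc3 (by positivity)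
  have hM2 : 0 < M2 := lt_of_lt_of_le (by positivity) (le_max_right _ _)
  refine ⟨m1 / (c7 * M2), M1 / m2, by positivity, by positivity, ?_⟩
  intro L μ ν ε η κg κfm κfp κ0 Sc κη κβ χ a b t
  intro hL hμ hν hε hη ht hκ0 hSc hκη hκβ hχ ha hb h0g hgm hmp hpη h4g h4p hi hii hiii htop
  -- basic positivity
  have hκ0pos : 0 < κ0 := by rw [hκ0]; positivity
  have hκg : 0 < κg := lt_of_lt_of_le hκ0pos h0g
  have hκfm : 0 < κfm := hκg.trans hgm
  have hκfp : 0 < κfp := lt_of_lt_of_le hκfm hmp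
  have hκηpos : 0 < κη := hκfp.trans hpη
  have hκβpos : 0 < κβ := by rw [hκβ]; positivity
  have hpβ : κfp ≤ κβ := by linarith
  have hlnq : 0 < Real.log (κη / κfp) :=
    Real.log_pos (by rw [lt_div_iff₀ hκfp]; linarith)
  have hlnr2 : 0 < Real.log (κβ / κfp) :=
    Real.log_pos (by rw [lt_div_iff₀ hκfp]; linarith)
  set lnq := Real.log (κη / κfp) with hlnqdef
  -- sums
  set S0 := ∑' k : Fin 2 → ℤ, t k with hS0def
  set S2 := ∑' k : Fin 2 → ℤ, knorm k ^ 2 * t k with hS2def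
  obtain ⟨k0, hk0⟩ := ht.exists_ne_zero
  have hk0ne : k0 ≠ 0 := fun h => hk0 (h ▸ ht.map_zero)
  have htk0 : 0 < t k0 := lt_of_le_of_ne (ht.nonneg k0) (Ne.symm hk0)
  have hS0 : 0 < S0 := by
    rw [hS0def]
    exact lt_of_lt_of_le htk0 (Summable.le_tsum (aux_summable ht) k0 (fun j _ => ht.nonneg j))
  have hS2 : 0 < S2 := by
    have h1 : 0 < knorm k0 ^ 2 * t k0 :=
      mul_pos (pow_pos (lt_of_lt_of_le one_pos (aux_one_le_knorm hk0ne)) 2) htk0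
    rw [hS2def]
    exact lt_of_lt_of_le h1 (Summable.le_tsum (aux_summable2 ht) k0
      (fun j _ => mul_nonneg (sq_nonneg _) (ht.nonneg j)))
  set W : ℝ := L ^ (-((2:ℕ) : ℤ)) with hWdef
  have hW : 0 < W := by rw [hWdef]; exact zpow_pos hL _
  have hχval : χ = μ * W * κ0 ^ 2 * S2 := by
    rw [hχ, hWdef, hS2def]; rfl
  have hχpos : 0 < χ := by rw [hχval]; positivity
  have hT : shellSumTop 2 L κ0 t κ0 = W * S0 := by
    rw [hWdef, hS0def]; exact aux_top_eq ht L hκ0pos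
  set T := shellSumTop 2 L κ0 t κ0 with hTdef
  -- Δ bounds
  set Δ : ℝ := κg ^ (-2 / 3 : ℝ) - κfm ^ (-2 / 3 : ℝ) with hΔdef
  have hΔpos : 0 < Δ := by
    have := Real.rpow_lt_rpow_of_neg hκg hgm (by norm_num : (-2/3 : ℝ) < 0)
    simp only [hΔdef]; linarith
  have hΔle : Δ ≤ κg ^ (-2 / 3 : ℝ) := by
    have := Real.rpow_nonneg hκfm.le (-2/3 : ℝ)
    simp only [hΔdef]; linarith
  have hΔge : d0 * κg ^ (-2 / 3 : ℝ) ≤ Δ := by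
    have h1 : κfm ^ (-2/3 : ℝ) ≤ (4 * κg) ^ (-2/3 : ℝ) :=
      Real.rpow_le_rpow_of_nonpos (by positivity) h4g (by norm_num)
    have h2 : ((4:ℝ) * κg) ^ (-2/3 : ℝ) = (4:ℝ) ^ (-2/3:ℝ) * κg ^ (-2/3:ℝ) :=
      Real.mul_rpow (by norm_num) hκg.le
    have h3 : κfm ^ (-2 / 3 : ℝ) ≤ (4:ℝ) ^ (-2/3:ℝ) * κg ^ (-2/3:ℝ) := h2 ▸ h1
    calc d0 * κg ^ (-2 / 3 : ℝ)
        = κg ^ (-2 / 3 : ℝ) - (4:ℝ) ^ (-2/3:ℝ) * κg ^ (-2/3:ℝ) := by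
          rw [hd0def]; ring
      _ ≤ κg ^ (-2 / 3 : ℝ) - κfm ^ (-2 / 3 : ℝ) := by linarith [h3]
      _ = Δ := by rw [hΔdef]
  -- ε comparison constants
  set E : ℝ := η * lnq / κη ^ 2 with hEdef
  have hκη2 : (0:ℝ) < κη ^ 2 := by positivity
  have hE1 : c1 * ε ≤ E := by
    have h := hi.1
    rw [div_le_div_iff₀ hlnq hε] at h
    rw [hEdef, le_div_iff₀ hκη2]
    linarith [h]
  have hE2 : E ≤ c2 * ε := by
    have h := hi.2
    rw [div_le_div_iff₀ hε hlnq] at h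
    rw [hEdef, div_le_iff₀ hκη2]
    linarith [h]
  have hEpos : 0 < E := lt_of_lt_of_le (by positivity) hE1
  set G : ℝ := η ^ (-2 / 9 : ℝ) * ν ^ (-1 / 3 : ℝ) * lnq ^ (-1 / 3 : ℝ) with hGdef
  have hGpos : 0 < G := by
    rw [hGdef]
    exact mul_pos (mul_pos (Real.rpow_pos_of_pos hη _) (Real.rpow_pos_of_pos hν _))
      (Real.rpow_pos_of_pos hlnq _)
  -- log facts
  have lκη : Real.log κη = (1 / 6 : ℝ) * (Real.log η - 3 * Real.log ν) := by
    rw [hκη, Real.log_rpow (by positivity),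
      Real.log_div (ne_of_gt hη) (by positivity), Real.log_pow]
    push_cast; ring
  have lκβ : Real.log κβ = (1 / 6 : ℝ) * (Real.log η - 3 * Real.log μ) := by
    rw [hκβ, Real.log_rpow (by positivity),
      Real.log_div (ne_of_gt hη) (by positivity), Real.log_pow]
    push_cast; ring
  have hScpos : 0 < Sc := by rw [hSc]; positivity
  have lSc : Real.log Sc = Real.log ν - Real.log μ := by
    rw [hSc, Real.log_div (ne_of_gt hν) (ne_of_gt hμ)]
  have hGE : G = E ^ (-1 / 3 : ℝ) := by
    refine aux_eq_of_log hGpos (Real.rpow_pos_of_pos hEpos _) ?_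
    rw [hGdef, hEdef, Real.log_rpow hEpos, hEdef,
      Real.log_mul (by positivity) (by positivity),
      Real.log_mul (by positivity) (by positivity),
      Real.log_rpow hη, Real.log_rpow hν, Real.log_rpow hlnq,
      Real.log_div (by positivity) (ne_of_gt hκη2),
      Real.log_mul (ne_of_gt hη) (ne_of_gt hlnq), Real.log_pow, lκη]
    push_cast; ring
  have hG1 : G ≤ c1 ^ (-1 / 3 : ℝ) * ε ^ (-1 / 3 : ℝ) := by
    rw [hGE, ← Real.mul_rpow hc1.le hε.le]
    exact Real.rpow_le_rpow_of_nonpos (by positivity) hE1 (by norm_num)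
  have hG2 : c2 ^ (-1 / 3 : ℝ) * ε ^ (-1 / 3 : ℝ) ≤ G := by
    rw [hGE, ← Real.mul_rpow hc2.le hε.le]
    exact Real.rpow_le_rpow_of_nonpos hEpos hE2 (by norm_num)
  -- identities for a and b
  have haG : a = μ * (G * Δ) := by
    have hpre : κβ ^ (-4 / 3 : ℝ) * Sc ^ (-1 / 3 : ℝ)
        = μ * (η ^ (-2 / 9 : ℝ) * ν ^ (-1 / 3 : ℝ)) := by
      refine aux_eq_of_log
        (mul_pos (Real.rpow_pos_of_pos hκβpos _) (Real.rpow_pos_of_pos hScpos _))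
        (mul_pos hμ (mul_pos (Real.rpow_pos_of_pos hη _) (Real.rpow_pos_of_pos hν _))) ?_
      rw [Real.log_mul (ne_of_gt (Real.rpow_pos_of_pos hκβpos _))
          (ne_of_gt (Real.rpow_pos_of_pos hScpos _)),
        Real.log_rpow hκβpos, Real.log_rpow hScpos,
        Real.log_mul (ne_of_gt hμ) (by positivity),
        Real.log_mul (by positivity) (by positivity),
        Real.log_rpow hη, Real.log_rpow hν, lκβ, lSc]
      ring
    rw [ha, hGdef, hpre]
    ring
  have hbβ : b = μ * (η ^ (-1 / 3 : ℝ) * Real.log (κβ / κfp)) := by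
    have h2 : κβ ^ (-2 : ℝ) = μ * η ^ (-1 / 3 : ℝ) := by
      refine aux_eq_of_log (Real.rpow_pos_of_pos hκβpos _)
        (mul_pos hμ (Real.rpow_pos_of_pos hη _)) ?_
      rw [Real.log_rpow hκβpos,
        Real.log_mul (ne_of_gt hμ) (ne_of_gt (Real.rpow_pos_of_pos hη _)),
        Real.log_rpow hη, lκβ]
      ring
    rw [hb, h2]; ring
  -- α and β
  set α : ℝ := χ * ε ^ (-1 / 3 : ℝ) * Δ with hαdef
  set β : ℝ := χ * η ^ (-1 / 3 : ℝ) * Real.log (κβ / κfp) with hβdef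
  have hεm : 0 < ε ^ (-1 / 3 : ℝ) := Real.rpow_pos_of_pos hε _
  have hηm : 0 < η ^ (-1 / 3 : ℝ) := Real.rpow_pos_of_pos hη _
  have hα : 0 < α := by rw [hαdef]; positivity
  have hβpos : 0 < β := by rw [hβdef]; positivity
  -- shell sums SG, SB
  set SG := shellSum 2 L κ0 t κg κfm with hSGdef
  set SB := shellSum 2 L κ0 t κfp κβ with hSBdef
  -- SG bounds
  set r1 : ℝ := κfm / κg with hr1def
  have hr1 : (4:ℝ) ≤ r1 := by rw [hr1def, le_div_iff₀ hκg]; linarith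
  set n1 : ℕ := ⌊Real.logb 2 r1⌋₊ with hn1def
  have hlogb1 : 0 ≤ Real.logb 2 r1 := Real.logb_nonneg (by norm_num) (by linarith)
  have h2n1 : (2:ℝ) ^ n1 ≤ r1 := by
    calc (2:ℝ) ^ n1 = (2:ℝ) ^ ((n1 : ℝ)) := (Real.rpow_natCast 2 n1).symm
      _ ≤ (2:ℝ) ^ Real.logb 2 r1 :=
          Real.rpow_le_rpow_of_exponent_le (by norm_num) (Nat.floor_le hlogb1)
      _ = r1 := Real.rpow_logb (by norm_num) (by norm_num) (by positivity)
  have h2n1' : r1 < (2:ℝ) ^ (n1 + 1) := by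
    calc r1 = (2:ℝ) ^ Real.logb 2 r1 :=
          (Real.rpow_logb (by norm_num) (by norm_num) (by positivity)).symm
      _ < (2:ℝ) ^ (((n1 + 1 : ℕ)) : ℝ) := by
          refine Real.rpow_lt_rpow_of_exponent_lt (by norm_num) ?_
          push_cast; exact Nat.lt_floor_add_one _
      _ = (2:ℝ) ^ (n1 + 1) := Real.rpow_natCast 2 (n1 + 1)
  have hSG_up : SG ≤ (c4 * (1 - ρ)⁻¹) * (χ * ε ^ (-1 / 3 : ℝ) * κg ^ (-2 / 3 : ℝ)) := by
    have hcov : κfm ≤ 2 ^ (n1 + 1) * κg := by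
      rw [hr1def] at h2n1'
      rw [div_lt_iff₀ hκg] at h2n1'
      linarith
    have h1 : SG ≤ shellSum 2 L κ0 t κg (2 ^ (n1 + 1) * κg) :=
      aux_shell_mono_right ht hL κ0 hgm.le hcov
    have h2 := aux_dyadic ht hL κ0 hκg (n1 + 1)
    have h3 : ∀ j ∈ Finset.range (n1 + 1),
        shellSum 2 L κ0 t (2 ^ j * κg) (2 * (2 ^ j * κg))
          ≤ (c4 * χ * ε ^ (-1 / 3 : ℝ) * κg ^ (-2 / 3 : ℝ)) * ρ ^ j := by
      intro j hj
      have hjn : j ≤ n1 := Nat.lt_succ_iff.1 (Finset.mem_range.1 hj)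
      have hpj : (1:ℝ) ≤ 2 ^ j := one_le_pow₀ (by norm_num)
      have hκj1 : κg ≤ 2 ^ j * κg := le_mul_of_one_le_left hκg.le hpj
      have hκj2 : 2 ^ j * κg ≤ κfm := by
        have h5 : (2:ℝ) ^ j ≤ 2 ^ n1 := pow_le_pow_right₀ (by norm_num) hjn
        have h6 : (2:ℝ) ^ j ≤ r1 := h5.trans h2n1
        rw [hr1def] at h6
        rw [le_div_iff₀ hκg] at h6
        linarith
      have hbd := (hii _ hκj1 hκj2).2
      have heq : ((2:ℝ) ^ j * κg) ^ (-2 / 3 : ℝ)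
          = κg ^ (-2 / 3 : ℝ) * ρ ^ j := by
        rw [Real.mul_rpow (by positivity) hκg.le, aux_pow_rpow, ← hρdef, mul_comm]
      calc shellSum 2 L κ0 t (2 ^ j * κg) (2 * (2 ^ j * κg))
          ≤ c4 * χ * ε ^ (-1 / 3 : ℝ) * ((2:ℝ) ^ j * κg) ^ (-2 / 3 : ℝ) := hbd
        _ = (c4 * χ * ε ^ (-1 / 3 : ℝ) * κg ^ (-2 / 3 : ℝ)) * ρ ^ j := by
            rw [heq]; ring
    have h4 : ∑ j ∈ Finset.range (n1 + 1), ρ ^ j ≤ (1 - ρ)⁻¹ := by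
      calc ∑ j ∈ Finset.range (n1 + 1), ρ ^ j
          ≤ ∑' j : ℕ, ρ ^ j := Summable.sum_le_tsum _ (fun i _ => pow_nonneg hρ0.le i)
            (summable_geometric_of_lt_one hρ0.le hρ1)
        _ = (1 - ρ)⁻¹ := tsum_geometric_of_lt_one hρ0.le hρ1
    have hconst : 0 ≤ c4 * χ * ε ^ (-1 / 3 : ℝ) * κg ^ (-2 / 3 : ℝ) := by positivity
    calc SG ≤ shellSum 2 L κ0 t κg (2 ^ (n1 + 1) * κg) := h1
      _ = ∑ j ∈ Finset.range (n1 + 1),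
            shellSum 2 L κ0 t (2 ^ j * κg) (2 * (2 ^ j * κg)) := h2
      _ ≤ ∑ j ∈ Finset.range (n1 + 1),
            (c4 * χ * ε ^ (-1 / 3 : ℝ) * κg ^ (-2 / 3 : ℝ)) * ρ ^ j :=
          Finset.sum_le_sum h3
      _ = (c4 * χ * ε ^ (-1 / 3 : ℝ) * κg ^ (-2 / 3 : ℝ))
            * ∑ j ∈ Finset.range (n1 + 1), ρ ^ j := by rw [Finset.mul_sum]
      _ ≤ (c4 * χ * ε ^ (-1 / 3 : ℝ) * κg ^ (-2 / 3 : ℝ)) * (1 - ρ)⁻¹ :=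
          mul_le_mul_of_nonneg_left h4 hconst
      _ = (c4 * (1 - ρ)⁻¹) * (χ * ε ^ (-1 / 3 : ℝ) * κg ^ (-2 / 3 : ℝ)) := by ring
  have hSG_lo : c3 * (χ * ε ^ (-1 / 3 : ℝ) * κg ^ (-2 / 3 : ℝ)) ≤ SG := by
    have h2κg : 2 * κg ≤ κfm := by linarith
    have hbd := (hii κg (le_refl κg) hgm.le).1
    have h1 : shellSum 2 L κ0 t κg (2 * κg) ≤ SG :=
      aux_shell_mono_right ht hL κ0 (by linarith) h2κg
    calc c3 * (χ * ε ^ (-1 / 3 : ℝ) * κg ^ (-2 / 3 : ℝ))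
        = c3 * χ * ε ^ (-1 / 3 : ℝ) * κg ^ (-2 / 3 : ℝ) := by ring
      _ ≤ shellSum 2 L κ0 t κg (2 * κg) := hbd
      _ ≤ SG := h1
  -- SB bounds
  set r2 : ℝ := κβ / κfp with hr2def
  have hr2 : (4:ℝ) ≤ r2 := by rw [hr2def, le_div_iff₀ hκfp]; linarith
  have hlogr2 : Real.log r2 = Real.log (κβ / κfp) := by rw [hr2def]
  set n2 : ℕ := ⌊Real.logb 2 r2⌋₊ with hn2def
  have hlogb2lb : (2:ℝ) ≤ Real.logb 2 r2 := by
    have h5 : ((2:ℝ) ^ (2:ℝ)) = 4 := by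
      calc (2:ℝ) ^ (2:ℝ) = (2:ℝ) ^ (((2:ℕ)):ℝ) := by norm_num
        _ = (2:ℝ) ^ (2:ℕ) := Real.rpow_natCast 2 2
        _ = 4 := by norm_num
    have h4 : Real.logb 2 (4:ℝ) = 2 := by
      rw [← h5, Real.logb_rpow (by norm_num) (by norm_num)]
    calc (2:ℝ) = Real.logb 2 4 := h4.symm
      _ ≤ Real.logb 2 r2 := Real.logb_le_logb_of_le (by norm_num) (by norm_num) hr2
  have hlogb2 : 0 ≤ Real.logb 2 r2 := by linarith only [hlogb2lb]
  have h2n2 : (2:ℝ) ^ n2 ≤ r2 := by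
    calc (2:ℝ) ^ n2 = (2:ℝ) ^ ((n2 : ℝ)) := (Real.rpow_natCast 2 n2).symm
      _ ≤ (2:ℝ) ^ Real.logb 2 r2 :=
          Real.rpow_le_rpow_of_exponent_le (by norm_num) (Nat.floor_le hlogb2)
      _ = r2 := Real.rpow_logb (by norm_num) (by norm_num) (by positivity)
  have hn2lb : Real.logb 2 r2 - 1 ≤ (n2 : ℝ) := by
    have := Nat.lt_floor_add_one (Real.logb 2 r2)
    rw [hn2def]; linarith
  have hn2ub : (n2 : ℝ) ≤ Real.logb 2 r2 := Nat.floor_le hlogb2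
  have hlogbr2 : Real.logb 2 r2 = Real.log r2 / Real.log 2 := rfl
  have hSB_lo : (c5 / (2 * Real.log 2)) * (χ * η ^ (-1 / 3 : ℝ) * Real.log (κβ / κfp)) ≤ SB := by
    have hcov : 2 ^ n2 * κfp ≤ κβ := by
      have : (2:ℝ) ^ n2 ≤ κβ / κfp := by rw [← hr2def]; exact h2n2
      rw [le_div_iff₀ hκfp] at this; linarith
    have h1 : shellSum 2 L κ0 t κfp (2 ^ n2 * κfp) ≤ SB := by
      refine aux_shell_mono_right ht hL κ0 ?_ hcov
      exact le_mul_of_one_le_left hκfp.le (one_le_pow₀ (by norm_num))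
    have h2 := aux_dyadic ht hL κ0 hκfp n2
    have h3 : ∀ j ∈ Finset.range n2,
        c5 * χ * η ^ (-1 / 3 : ℝ) ≤ shellSum 2 L κ0 t (2 ^ j * κfp) (2 * (2 ^ j * κfp)) := by
      intro j hj
      have hjn : j < n2 := Finset.mem_range.1 hj
      have hκj1 : κfp ≤ 2 ^ j * κfp :=
        le_mul_of_one_le_left hκfp.le (one_le_pow₀ (by norm_num))
      have hκj2 : 2 ^ j * κfp ≤ κβ := by
        have h5 : (2:ℝ) ^ j ≤ 2 ^ n2 := pow_le_pow_right₀ (by norm_num) hjn.le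
        exact (mul_le_mul_of_nonneg_right h5 hκfp.le).trans hcov
      exact (hiii _ hκj1 hκj2).1
    have h4 : (n2 : ℝ) * (c5 * χ * η ^ (-1 / 3 : ℝ))
        ≤ ∑ j ∈ Finset.range n2, shellSum 2 L κ0 t (2 ^ j * κfp) (2 * (2 ^ j * κfp)) := by
      calc (n2 : ℝ) * (c5 * χ * η ^ (-1 / 3 : ℝ))
          = ∑ _j ∈ Finset.range n2, c5 * χ * η ^ (-1 / 3 : ℝ) := by
            rw [Finset.sum_const, Finset.card_range, nsmul_eq_mul]
        _ ≤ _ := Finset.sum_le_sum h3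
    have h6 : Real.log (κβ / κfp) / (2 * Real.log 2) ≤ (n2 : ℝ) := by
      have h7 : Real.log r2 / Real.log 2 - 1 ≤ (n2 : ℝ) := by
        rw [← hlogbr2]; exact hn2lb
      have h8 : (2:ℝ) ≤ Real.log r2 / Real.log 2 := by rw [← hlogbr2]; exact hlogb2lb
      rw [← hlogr2]
      have h9 : Real.log r2 / Real.log 2 / 2 ≤ Real.log r2 / Real.log 2 - 1 := by linarith
      calc Real.log r2 / (2 * Real.log 2) = Real.log r2 / Real.log 2 / 2 := by
            rw [div_div]; ring_nf
        _ ≤ Real.log r2 / Real.log 2 - 1 := h9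
        _ ≤ (n2 : ℝ) := h7
    have hcpos : 0 ≤ c5 * χ * η ^ (-1 / 3 : ℝ) := by positivity
    calc (c5 / (2 * Real.log 2)) * (χ * η ^ (-1 / 3 : ℝ) * Real.log (κβ / κfp))
        = (Real.log (κβ / κfp) / (2 * Real.log 2)) * (c5 * χ * η ^ (-1 / 3 : ℝ)) := by ring
      _ ≤ (n2 : ℝ) * (c5 * χ * η ^ (-1 / 3 : ℝ)) :=
          mul_le_mul_of_nonneg_right h6 hcpos
      _ ≤ ∑ j ∈ Finset.range n2, shellSum 2 L κ0 t (2 ^ j * κfp) (2 * (2 ^ j * κfp)) := h4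
      _ = shellSum 2 L κ0 t κfp (2 ^ n2 * κfp) := h2.symm
      _ ≤ SB := h1
  have hSB_up : SB ≤ (3 * c6 / (2 * Real.log 2)) * (χ * η ^ (-1 / 3 : ℝ) * Real.log (κβ / κfp)) := by
    have hcov : κβ ≤ 2 ^ (n2 + 1) * κfp := by
      have h5 : r2 < (2:ℝ) ^ (n2 + 1) := by
        calc r2 = (2:ℝ) ^ Real.logb 2 r2 :=
              (Real.rpow_logb (by norm_num) (by norm_num) (by positivity)).symm
          _ < (2:ℝ) ^ (((n2 + 1 : ℕ)) : ℝ) := by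
              refine Real.rpow_lt_rpow_of_exponent_lt (by norm_num) ?_
              push_cast; exact Nat.lt_floor_add_one _
          _ = (2:ℝ) ^ (n2 + 1) := Real.rpow_natCast 2 (n2 + 1)
      rw [hr2def, div_lt_iff₀ hκfp] at h5
      linarith
    have h1 : SB ≤ shellSum 2 L κ0 t κfp (2 ^ (n2 + 1) * κfp) :=
      aux_shell_mono_right ht hL κ0 hpβ hcov
    have h2 := aux_dyadic ht hL κ0 hκfp (n2 + 1)
    have h3 : ∀ j ∈ Finset.range (n2 + 1),
        shellSum 2 L κ0 t (2 ^ j * κfp) (2 * (2 ^ j * κfp)) ≤ c6 * χ * η ^ (-1 / 3 : ℝ) := by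
      intro j hj
      have hjn : j ≤ n2 := Nat.lt_succ_iff.1 (Finset.mem_range.1 hj)
      have hκj1 : κfp ≤ 2 ^ j * κfp :=
        le_mul_of_one_le_left hκfp.le (one_le_pow₀ (by norm_num))
      have hκj2 : 2 ^ j * κfp ≤ κβ := by
        have h5 : (2:ℝ) ^ j ≤ 2 ^ n2 := pow_le_pow_right₀ (by norm_num) hjn
        have h6 : (2:ℝ) ^ n2 ≤ r2 := h2n2
        rw [hr2def, le_div_iff₀ hκfp] at h6
        exact (mul_le_mul_of_nonneg_right h5 hκfp.le).trans h6
      exact (hiii _ hκj1 hκj2).2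
    have h4 : ∑ j ∈ Finset.range (n2 + 1),
        shellSum 2 L κ0 t (2 ^ j * κfp) (2 * (2 ^ j * κfp))
          ≤ ((n2 : ℝ) + 1) * (c6 * χ * η ^ (-1 / 3 : ℝ)) := by
      calc ∑ j ∈ Finset.range (n2 + 1),
            shellSum 2 L κ0 t (2 ^ j * κfp) (2 * (2 ^ j * κfp))
          ≤ ∑ _j ∈ Finset.range (n2 + 1), c6 * χ * η ^ (-1 / 3 : ℝ) :=
            Finset.sum_le_sum h3
        _ = ((n2 : ℝ) + 1) * (c6 * χ * η ^ (-1 / 3 : ℝ)) := by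
            rw [Finset.sum_const, Finset.card_range, nsmul_eq_mul]; push_cast; ring
    have h6 : (n2 : ℝ) + 1 ≤ 3 * Real.log (κβ / κfp) / (2 * Real.log 2) := by
      rw [← hlogr2]
      have h7 : (n2 : ℝ) ≤ Real.log r2 / Real.log 2 := by
        rw [← hlogbr2]; exact hn2ub
      have h8 : (2:ℝ) ≤ Real.log r2 / Real.log 2 := by rw [← hlogbr2]; exact hlogb2lb
      have h9 : (1:ℝ) ≤ Real.log r2 / Real.log 2 / 2 := by linarith
      have : (n2 : ℝ) + 1 ≤ Real.log r2 / Real.log 2 + Real.log r2 / Real.log 2 / 2 := by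
        linarith
      calc (n2 : ℝ) + 1 ≤ Real.log r2 / Real.log 2 + Real.log r2 / Real.log 2 / 2 := this
        _ = 3 * Real.log r2 / (2 * Real.log 2) := by
            field_simp; ring
    have hcpos : 0 ≤ c6 * χ * η ^ (-1 / 3 : ℝ) := by positivity
    calc SB ≤ shellSum 2 L κ0 t κfp (2 ^ (n2 + 1) * κfp) := h1
      _ = ∑ j ∈ Finset.range (n2 + 1),
            shellSum 2 L κ0 t (2 ^ j * κfp) (2 * (2 ^ j * κfp)) := h2
      _ ≤ ((n2 : ℝ) + 1) * (c6 * χ * η ^ (-1 / 3 : ℝ)) := h4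
      _ ≤ (3 * Real.log (κβ / κfp) / (2 * Real.log 2)) * (c6 * χ * η ^ (-1 / 3 : ℝ)) :=
          mul_le_mul_of_nonneg_right h6 hcpos
      _ = (3 * c6 / (2 * Real.log 2)) * (χ * η ^ (-1 / 3 : ℝ) * Real.log (κβ / κfp)) := by
          ring
  -- convert SG bounds to α
  have hχεm : 0 ≤ χ * ε ^ (-1 / 3 : ℝ) := by positivity
  have hSGα_lo : c3 * α ≤ SG := by
    refine le_trans ?_ hSG_lo
    rw [hαdef]
    exact mul_le_mul_of_nonneg_left (mul_le_mul_of_nonneg_left hΔle hχεm) hc3.le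
  have hSGα_up : SG ≤ (c4 * (1 - ρ)⁻¹ / d0) * α := by
    refine le_trans hSG_up ?_
    rw [hαdef]
    have hkg23 : κg ^ (-2 / 3 : ℝ) ≤ Δ / d0 := by
      rw [le_div_iff₀ hd0]
      linarith [hΔge]
    have hc4ρ : 0 ≤ c4 * (1 - ρ)⁻¹ :=
      le_of_lt (mul_pos hc4 (inv_pos.2 (by linarith only [hρ1])))
    have : χ * ε ^ (-1 / 3 : ℝ) * κg ^ (-2 / 3 : ℝ) ≤ χ * ε ^ (-1 / 3 : ℝ) * (Δ / d0) :=
      mul_le_mul_of_nonneg_left hkg23 hχεm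
    calc (c4 * (1 - ρ)⁻¹) * (χ * ε ^ (-1 / 3 : ℝ) * κg ^ (-2 / 3 : ℝ))
        ≤ (c4 * (1 - ρ)⁻¹) * (χ * ε ^ (-1 / 3 : ℝ) * (Δ / d0)) :=
          mul_le_mul_of_nonneg_left this hc4ρ
      _ = (c4 * (1 - ρ)⁻¹ / d0) * (χ * ε ^ (-1 / 3 : ℝ) * Δ) := by
          field_simp
  -- β form of SB bounds
  have hSBβ_lo : (c5 / (2 * Real.log 2)) * β ≤ SB := by
    rw [hβdef]; exact hSB_lo
  have hSBβ_up : SB ≤ (3 * c6 / (2 * Real.log 2)) * β := by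
    rw [hβdef]; exact hSB_up
  -- T bounds
  have hT_lo : m2 * (α + β) ≤ T := by
    have h1 : SG + SB ≤ T := aux_two_shell_le_top ht hL κ0 h0g hgm.le hmp hpβ
    have h2 : m2 ≤ c3 := min_le_left _ _
    have h3 : m2 ≤ c5 / (2 * Real.log 2) := min_le_right _ _
    have h4 := mul_le_mul_of_nonneg_right h2 hα.le
    have h5 := mul_le_mul_of_nonneg_right h3 hβpos.le
    linarith only [hSGα_lo, hSBβ_lo, h1, h4, h5]
  have hT_up : T ≤ c7 * M2 * (α + β) := by
    have h2 : c4 * (1 - ρ)⁻¹ / d0 ≤ M2 := le_max_left _ _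
    have h3 : 3 * c6 / (2 * Real.log 2) ≤ M2 := le_max_right _ _
    have h4 : SG + SB ≤ M2 * (α + β) := by
      have h5 := mul_le_mul_of_nonneg_right h2 hα.le
      have h6 := mul_le_mul_of_nonneg_right h3 hβpos.le
      linarith only [hSGα_up, hSBβ_up, h5, h6]
    calc T ≤ c7 * (SG + SB) := htop
      _ ≤ c7 * (M2 * (α + β)) := mul_le_mul_of_nonneg_left h4 hc7.le
      _ = c7 * M2 * (α + β) := by ring
  have hTpos : 0 < T := lt_of_lt_of_le (by positivity) hT_lo
  -- numerator N = χ (a+b) / μ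
  set N : ℝ := χ * (a + b) / μ with hNdef
  have hNform : N = χ * (G * Δ) + β := by
    rw [hNdef, haG, hbβ, hβdef]
    field_simp
  have hN_up : N ≤ M1 * (α + β) := by
    have h1 : χ * (G * Δ) ≤ c1 ^ (-1 / 3 : ℝ) * α := by
      have h0 : G * Δ ≤ c1 ^ (-1 / 3 : ℝ) * ε ^ (-1 / 3 : ℝ) * Δ :=
        mul_le_mul_of_nonneg_right hG1 hΔpos.le
      calc χ * (G * Δ) ≤ χ * (c1 ^ (-1 / 3 : ℝ) * ε ^ (-1 / 3 : ℝ) * Δ) :=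
            mul_le_mul_of_nonneg_left h0 hχpos.le
        _ = c1 ^ (-1 / 3 : ℝ) * α := by rw [hαdef]; ring
    have h2 : c1 ^ (-1 / 3 : ℝ) ≤ M1 := le_max_left _ _
    have h3 : (1:ℝ) ≤ M1 := le_max_right _ _
    have h4 := mul_le_mul_of_nonneg_right h2 hα.le
    have h5 := le_mul_of_one_le_left hβpos.le h3
    rw [hNform]
    calc χ * (G * Δ) + β ≤ M1 * α + M1 * β := add_le_add (h1.trans h4) h5
      _ = M1 * (α + β) := (mul_add M1 α β).symm
  have hN_lo : m1 * (α + β) ≤ N := by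
    have h1 : m1 * α ≤ χ * (G * Δ) := by
      have h2 : c2 ^ (-1 / 3 : ℝ) * ε ^ (-1 / 3 : ℝ) * Δ ≤ G * Δ :=
        mul_le_mul_of_nonneg_right hG2 hΔpos.le
      have h3 : m1 ≤ c2 ^ (-1 / 3 : ℝ) := min_le_left _ _
      calc m1 * α ≤ c2 ^ (-1 / 3 : ℝ) * α := mul_le_mul_of_nonneg_right h3 hα.le
        _ = χ * (c2 ^ (-1 / 3 : ℝ) * ε ^ (-1 / 3 : ℝ) * Δ) := by rw [hαdef]; ring
        _ ≤ χ * (G * Δ) := mul_le_mul_of_nonneg_left h2 hχpos.le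
    have h3 : m1 ≤ (1:ℝ) := min_le_right _ _
    have h4 := mul_le_of_le_one_left hβpos.le h3
    rw [hNform]
    calc m1 * (α + β) = m1 * α + m1 * β := mul_add m1 α β
      _ ≤ χ * (G * Δ) + β := add_le_add h1 h4
  -- identify kThetaSq * (a+b) with N / T
  have hQ : kThetaSq 2 κ0 t * (a + b) = N / T := by
    have hkt : kThetaSq 2 κ0 t = κ0 ^ 2 * S2 / S0 := by
      rw [hS2def, hS0def]; rfl
    rw [hkt, hNdef, hχval, hT]
    field_simp
  rw [hQ]
  constructor
  · rw [le_div_iff₀ hTpos]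
    have h1 : m1 / (c7 * M2) * T ≤ m1 / (c7 * M2) * (c7 * M2 * (α + β)) :=
      mul_le_mul_of_nonneg_left hT_up (by positivity)
    have h2 : m1 / (c7 * M2) * (c7 * M2 * (α + β)) = m1 * (α + β) := by
      field_simp
    calc m1 / (c7 * M2) * T ≤ m1 * (α + β) := by rw [← h2]; exact h1
      _ ≤ N := hN_lo
  · rw [div_le_iff₀ hTpos]
    have h1 : M1 / m2 * (m2 * (α + β)) ≤ M1 / m2 * T :=
      mul_le_mul_of_nonneg_left hT_lo (by positivity)
    have h2 : M1 / m2 * (m2 * (α + β)) = M1 * (α + β) := by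
      field_simp
    calc N ≤ M1 * (α + β) := hN_up
      _ = M1 / m2 * (m2 * (α + β)) := h2.symm
      _ ≤ M1 / m2 * T := h1
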